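/- Let h > 0, M ≥ 0, K ≥ 0 and let t₀ < t₁ < t₂ be real numbers with t₁ = t₀ + h and t₂ = t₁ + h. Let G₁ : ℝ → ℝ be twice continuously differentiable on [t₀, t₁] with |G₁″(s)| ≤ M for all s ∈ [t₀, t₁], and let G₂ : ℝ → ℝ be twice continuously differentiable on [t₁, t₂] with |G₂″(s)| ≤ M for all s ∈ [t₁, t₂]. Assume |G₂′(t₁) − G₁′(t₁)| ≤ K·h². Then |G₁(t₀) − G₁(t₁) + G₂(t₂) − G₂(t₁)| ≤ M·h² + K·h³. -/

import Mathlib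

open Set

/-- Taylor-type estimate with expansion point at an endpoint `c ∈ {a, b}`. -/
lemma taylor_endpoint_est (a b M : ℝ) (hab : a < b) (f : ℝ → ℝ)
    (hf : ContDiffOn ℝ 2 f (Icc a b))
    (hbd : ∀ s ∈ Icc a b, |iteratedDerivWithin 2 f (Icc a b) s| ≤ M)
    (c : ℝ) (hc : c = a ∨ c = b) :
    |f b - f a - (b - a) * derivWithin f (Icc a b) c| ≤ M * (b - a) ^ 2 / 2 := by
  have hu : UniqueDiffOn ℝ (Icc a b) := uniqueDiffOn_Icc hab
  set f' : ℝ → ℝ := derivWithin f (Icc a b) with hf'def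
  have hcmem : c ∈ Icc a b := by rcases hc with rfl | rfl <;> simp [hab.le]
  -- differentiability of f'
  have hdf' : DifferentiableOn ℝ f' (Icc a b) := by
    have := hf.differentiableOn_iteratedDerivWithin (m := 1) (by norm_num) hu
    refine this.congr fun x hx => ?_
    rw [iteratedDerivWithin_one]
  -- Lipschitz-type bound on f' from c
  have hLip : ∀ x ∈ Icc a b, |f' x - f' c| ≤ M * |x - c| := by
    intro x hx
    have := Convex.norm_image_sub_le_of_norm_hasDerivWithin_le
      (f := f') (f' := derivWithin f' (Icc a b)) (C := M)
      (fun y hy => (hdf' y hy).hasDerivWithinAt)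
      (fun y hy => by
        have h2 : iteratedDerivWithin 2 f (Icc a b) y
            = derivWithin f' (Icc a b) y := by
          rw [show (2 : ℕ) = 1 + 1 from rfl, iteratedDerivWithin_succ]
          exact derivWithin_congr (fun z hz => (congrFun iteratedDerivWithin_one z))
            (congrFun iteratedDerivWithin_one y)
        simpa [Real.norm_eq_abs, ← h2] using hbd y hy)
      (convex_Icc a b) hcmem hx
    simpa [Real.norm_eq_abs] using this
  have hcontf' : ContinuousOn f' (Icc a b) := hdf'.continuousOn
  -- FTC
  have hFTC : ∫ s in a..b, f' s = f b - f a := by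
    refine intervalIntegral.integral_eq_sub_of_hasDerivAt_of_le hab.le
      (hf.continuousOn) (fun x hx => ?_) ?_
    · have hnhds : Icc a b ∈ nhds x := Icc_mem_nhds hx.1 hx.2
      have hdx : DifferentiableAt ℝ f x :=
        ((hf.differentiableOn (by norm_num)) x (Ioo_subset_Icc_self hx)).differentiableAt hnhds
      have : f' x = deriv f x := derivWithin_of_mem_nhds hnhds
      rw [this]
      exact hdx.hasDerivAt
    · exact (hcontf'.mono (by rw [uIcc_of_le hab.le])).intervalIntegrable
  have hint1 : IntervalIntegrable (fun s => f' s - f' c) MeasureTheory.volume a b := by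
    apply ContinuousOn.intervalIntegrable
    rw [uIcc_of_le hab.le]
    exact hcontf'.sub continuousOn_const
  have key : f b - f a - (b - a) * f' c = ∫ s in a..b, (f' s - f' c) := by
    rw [intervalIntegral.integral_sub
        ((hcontf'.mono (by rw [uIcc_of_le hab.le])).intervalIntegrable)
        intervalIntegrable_const,
      hFTC, intervalIntegral.integral_const, smul_eq_mul]
  rw [key]
  have habs : |∫ s in a..b, (f' s - f' c)| ≤ ∫ s in a..b, M * |s - c| := by
    refine (intervalIntegral.abs_integral_le_integral_abs hab.le).trans ?_
    refine intervalIntegral.integral_mono_on hab.le ?_ ?_ ?_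
    · apply ContinuousOn.intervalIntegrable
      rw [uIcc_of_le hab.le]
      exact (hcontf'.sub continuousOn_const).abs
    · apply ContinuousOn.intervalIntegrable
      exact (continuousOn_const.mul (continuous_abs.comp (by continuity)).continuousOn)
    · exact fun s hs => hLip s hs
  refine habs.trans (le_of_eq ?_)
  rcases hc with rfl | rfl
  · have hcongr : ∫ s in c..b, M * |s - c| = ∫ s in c..b, M * (s - c) := by
      apply intervalIntegral.integral_congr
      intro s hs
      rw [uIcc_of_le hab.le] at hs
      show M * |s - c| = M * (s - c)
      rw [abs_of_nonneg (by linarith [hs.1])]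
    rw [hcongr, intervalIntegral.integral_const_mul, intervalIntegral.integral_sub
        (by apply ContinuousOn.intervalIntegrable; exact continuousOn_id)
        intervalIntegrable_const,
      integral_id, intervalIntegral.integral_const, smul_eq_mul]
    ring
  · have hcongr : ∫ s in a..c, M * |s - c| = ∫ s in a..c, M * (c - s) := by
      apply intervalIntegral.integral_congr
      intro s hs
      rw [uIcc_of_le hab.le] at hs
      show M * |s - c| = M * (c - s)
      rw [abs_of_nonpos (by linarith [hs.2]), neg_sub]
    rw [hcongr, intervalIntegral.integral_const_mul, intervalIntegral.integral_sub
        intervalIntegrable_const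
        (by apply ContinuousOn.intervalIntegrable; exact continuousOn_id),
      integral_id, intervalIntegral.integral_const, smul_eq_mul]
    ring

theorem two_sided_taylor_cancellation
    (h M K : ℝ) (hh : 0 < h) (hM : 0 ≤ M) (hK : 0 ≤ K)
    (t₀ t₁ t₂ : ℝ) (ht₁ : t₁ = t₀ + h) (ht₂ : t₂ = t₁ + h)
    (G₁ G₂ : ℝ → ℝ)
    (hG₁ : ContDiffOn ℝ 2 G₁ (Icc t₀ t₁))
    (hG₁'' : ∀ s ∈ Icc t₀ t₁, |iteratedDerivWithin 2 G₁ (Icc t₀ t₁) s| ≤ M)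
    (hG₂ : ContDiffOn ℝ 2 G₂ (Icc t₁ t₂))
    (hG₂'' : ∀ s ∈ Icc t₁ t₂, |iteratedDerivWithin 2 G₂ (Icc t₁ t₂) s| ≤ M)
    (hmatch : |derivWithin G₂ (Icc t₁ t₂) t₁ - derivWithin G₁ (Icc t₀ t₁) t₁|
        ≤ K * h ^ 2) :
    |G₁ t₀ - G₁ t₁ + G₂ t₂ - G₂ t₁| ≤ M * h ^ 2 + K * h ^ 3 := by
  have h01 : t₀ < t₁ := by rw [ht₁]; linarith
  have h12 : t₁ < t₂ := by rw [ht₂]; linarith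
  set D₁ := derivWithin G₁ (Icc t₀ t₁) t₁
  set D₂ := derivWithin G₂ (Icc t₁ t₂) t₁
  have e1 := taylor_endpoint_est t₀ t₁ M h01 G₁ hG₁ hG₁'' t₁ (Or.inr rfl)
  have e2 := taylor_endpoint_est t₁ t₂ M h12 G₂ hG₂ hG₂'' t₁ (Or.inl rfl)
  have hba1 : t₁ - t₀ = h := by rw [ht₁]; ring
  have hba2 : t₂ - t₁ = h := by rw [ht₂]; ring
  rw [hba1] at e1; rw [hba2] at e2
  have key : G₁ t₀ - G₁ t₁ + G₂ t₂ - G₂ t₁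
      = -(G₁ t₁ - G₁ t₀ - h * D₁) + (G₂ t₂ - G₂ t₁ - h * D₂) + h * (D₂ - D₁) := by
    ring
  rw [key]
  have hmul : |h * (D₂ - D₁)| ≤ h * (K * h ^ 2) := by
    rw [abs_mul, abs_of_pos hh]
    exact mul_le_mul_of_nonneg_left hmatch hh.le
  calc |(-(G₁ t₁ - G₁ t₀ - h * D₁)) + (G₂ t₂ - G₂ t₁ - h * D₂) + h * (D₂ - D₁)|
      ≤ |(-(G₁ t₁ - G₁ t₀ - h * D₁)) + (G₂ t₂ - G₂ t₁ - h * D₂)| + |h * (D₂ - D₁)| :=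
        abs_add_le _ _
    _ ≤ (|(-(G₁ t₁ - G₁ t₀ - h * D₁))| + |G₂ t₂ - G₂ t₁ - h * D₂|) + |h * (D₂ - D₁)| := by
        gcongr; exact abs_add_le _ _
    _ ≤ (M * h ^ 2 / 2 + M * h ^ 2 / 2) + h * (K * h ^ 2) := by
        rw [abs_neg]; gcongr
    _ = M * h ^ 2 + K * h ^ 3 := by ring
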